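/- Let I be the set of pairs ({i,j}, β) with {i,j} a 2-element subset of {1,2,3,4,5} and β ∈ {0,1,2} (indexing third roots of unity), so |I| = 30. Define the symmetric 30×30 integer matrix M by: M[({i,j},β), ({s,t},γ)] = −3 if ({i,j},β) = ({s,t},γ); 1 if {i,j} ∩ {s,t} = ∅; and 0 otherwise. Then M has rank 25, and the kernel of M over ℚ has dimension 5. -/

import Mathlib

open Finset

/-- Index set for the 30 elliptic curves `E_{ij}^β`: a pair `i < j` in `Fin 5`
together with `β ∈ μ₃` encoded as `ZMod 3`. -/
abbrev Idx : Type := {p : Fin 5 × Fin 5 // p.1 < p.2} × ZMod 3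

/-- The 30×30 intersection matrix of the curves `E_{ij}^β`: `−3` on the diagonal,
`1` between indices with disjoint pairs `{i,j} ∩ {s,t} = ∅`, and `0` otherwise. -/
def M : Matrix Idx Idx ℚ := fun x y =>
  if x = y then -3
  else if x.1.1.1 ≠ y.1.1.1 ∧ x.1.1.1 ≠ y.1.1.2 ∧ x.1.1.2 ≠ y.1.1.1 ∧ x.1.1.2 ≠ y.1.1.2
  then 1 else 0

def Mz : Matrix Idx Idx ℤ := fun x y =>
  if x = y then -3
  else if x.1.1.1 ≠ y.1.1.1 ∧ x.1.1.1 ≠ y.1.1.2 ∧ x.1.1.2 ≠ y.1.1.1 ∧ x.1.1.2 ≠ y.1.1.2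
  then 1 else 0

def M2 : Matrix Idx Idx ℤ := fun x y =>
  if x = y then 18
  else if x.1 = y.1 then 9
  else if x.1.1.1 ≠ y.1.1.1 ∧ x.1.1.1 ≠ y.1.1.2 ∧ x.1.1.2 ≠ y.1.1.1 ∧ x.1.1.2 ≠ y.1.1.2
  then -6 else 3

set_option maxRecDepth 40000 in
set_option maxHeartbeats 1000000 in
lemma hM2 : Mz * Mz = M2 := by decide

set_option maxRecDepth 40000 in
set_option maxHeartbeats 2000000 in
lemma hkey : M2 * M2 + 6 • (M2 * Mz) = 45 • M2 + 162 • Mz := by decide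

set_option maxRecDepth 40000 in
set_option maxHeartbeats 1000000 in
lemma htr3 : (M2 * Mz).trace = -3240 := by decide

lemma htr2 : M2.trace = 540 := by decide

lemma htr1 : Mz.trace = -90 := by decide
lemma hcard : Fintype.card Idx = 30 := by decide

lemma hMcast : M = (Int.castRingHom ℚ).mapMatrix Mz := by
  ext x y
  simp only [M, Mz, RingHom.mapMatrix_apply, Matrix.map_apply, Int.coe_castRingHom]
  split_ifs <;> norm_num

lemma trace_cast (A : Matrix Idx Idx ℤ) :
    ((Int.castRingHom ℚ).mapMatrix A).trace = (A.trace : ℚ) := by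
  simp only [Matrix.trace, Matrix.diag, RingHom.mapMatrix_apply, Matrix.map_apply,
    Int.coe_castRingHom]
  norm_cast

set_option maxRecDepth 10000 in
/-- The intersection matrix `M` has rank 25, and its kernel over ℚ has dimension 5. -/
theorem stmt_5 : Fintype.card Idx = 30 ∧ M.rank = 25 ∧
    Module.finrank ℚ (LinearMap.ker M.mulVecLin) = 5 := by
  classical
  set φ : Matrix Idx Idx ℤ →+* Matrix Idx Idx ℚ := (Int.castRingHom ℚ).mapMatrix with hφ
  set B : Matrix Idx Idx ℚ := φ M2 with hB
  have hMM : M * M = B := by rw [hMcast, hB, ← map_mul, hM2]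
  have hMz : φ Mz = M := hMcast.symm
  have hkeyQ : B * B + 6 • (B * M) = 45 • B + 162 • M := by
    have := congrArg φ hkey
    simpa only [map_add, map_mul, map_nsmul, hMz, ← hB] using this
  set Q : Matrix Idx Idx ℚ := M * M + 6 • M - 45 • (1 : Matrix Idx Idx ℚ) with hQdef
  set P : Matrix Idx Idx ℚ := Q * M with hPdef
  have hMPn : M * P = (162 : ℕ) • M := by
    have h1 : M * P = B * B + 6 • (B * M) - 45 • B := by
      rw [hPdef, hQdef, ← hMM]; noncomm_ring
    rw [h1, hkeyQ]; abel
  have hMP : M * P = (162 : ℚ) • M := by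
    rw [hMPn, ← Nat.cast_smul_eq_nsmul ℚ]; norm_num
  have hPP : P * P = (162 : ℚ) • P := by
    calc P * P = Q * (M * P) := by rw [hPdef]; noncomm_ring
    _ = Q * ((162 : ℚ) • M) := by rw [hMP]
    _ = (162 : ℚ) • (Q * M) := by rw [mul_smul_comm]
    _ = (162 : ℚ) • P := by rw [hPdef]
  set c : ℚ := (162 : ℚ)⁻¹ with hc
  set E : Matrix Idx Idx ℚ := 1 - c • P with hE
  have hEE : E * E = E := by
    have h : E * E = 1 - c • P - c • P + (c * c) • (P * P) := by
      rw [hE]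
      simp only [mul_sub, sub_mul, one_mul, mul_one, smul_mul_smul_comm]
      abel
    rw [h, hPP, smul_smul]
    have h2 : c * c * 162 = c := by rw [hc]; norm_num
    rw [h2, hE]; abel
  have hME : M * E = 0 := by
    rw [hE, mul_sub, mul_one, mul_smul_comm, hMP, smul_smul]
    have : c * 162 = 1 := by rw [hc]; norm_num
    rw [this, one_smul, sub_self]
  have hfix : ∀ v ∈ LinearMap.ker M.mulVecLin, E.mulVec v = v := by
    intro v hv
    have hv' : M.mulVec v = 0 := hv
    rw [hE, Matrix.sub_mulVec, Matrix.one_mulVec, Matrix.smul_mulVec, hPdef,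
      ← Matrix.mulVec_mulVec, hv', Matrix.mulVec_zero, smul_zero, sub_zero]
  have hrange : LinearMap.range E.mulVecLin = LinearMap.ker M.mulVecLin := by
    apply le_antisymm
    · rintro x ⟨v, rfl⟩
      have : M.mulVec (E.mulVec v) = 0 := by
        rw [Matrix.mulVec_mulVec, hME, Matrix.zero_mulVec]
      simpa [LinearMap.mem_ker] using this
    · intro v hv
      exact ⟨v, hfix v hv⟩
  have hproj : LinearMap.IsProj (LinearMap.ker M.mulVecLin) E.mulVecLin := by
    constructor
    · intro x
      rw [← hrange]
      exact LinearMap.mem_range_self _ x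
    · intro x hx
      exact hfix x hx
  have hBMtr : (B * M).trace = -3240 := by
    have h : B * M = φ (M2 * Mz) := by rw [map_mul, hB, hMz]
    rw [h, hφ, trace_cast, htr3]; norm_num
  have hBtr : B.trace = 540 := by
    rw [hB, hφ, trace_cast, htr2]; norm_num
  have hMtr : M.trace = -90 := by
    rw [hMcast, trace_cast, htr1]; norm_num
  have hP2 : P = B * M + 6 • B - 45 • M := by
    rw [hPdef, hQdef, ← hMM]; noncomm_ring
  have hPtr : P.trace = 4050 := by
    rw [hP2, Matrix.trace_sub, Matrix.trace_add, Matrix.trace_smul, Matrix.trace_smul,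
      hBMtr, hBtr, hMtr]
    norm_num
  have htrE : LinearMap.trace ℚ (Idx → ℚ) E.mulVecLin = 5 := by
    have h1 : LinearMap.trace ℚ (Idx → ℚ) E.mulVecLin = E.trace := by
      rw [LinearMap.trace_eq_matrix_trace ℚ (Pi.basisFun ℚ Idx),
        LinearMap.toMatrix_eq_toMatrix', ← Matrix.toLin'_apply' E,
        LinearMap.toMatrix'_toLin']
    rw [h1, hE, Matrix.trace_sub, Matrix.trace_smul, hPtr, Matrix.trace_one, hcard, hc]
    norm_num
  have hker : Module.finrank ℚ (LinearMap.ker M.mulVecLin) = 5 := by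
    have h := hproj.trace
    rw [htrE] at h
    exact_mod_cast h.symm
  refine ⟨hcard, ?_, hker⟩
  have hrn := LinearMap.finrank_range_add_finrank_ker M.mulVecLin
  rw [Module.finrank_fintype_fun_eq_card, hcard, hker] at hrn
  rw [Matrix.rank]
  omega
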